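/- Let G be a monotone class of graphs, H a graph, and L an essential G-duplicable independent collection of separations of H. Let H' be the graph obtained from H by adding edges so that A∩B is a clique for every (A,B) ∈ L. Then some subdivision of H', in which each edge is subdivided between 0 and |V(H)|−2 times, belongs to G. -/

import Mathlib

def IsSeparation {V : Type} (G : SimpleGraph V) (p : Set V × Set V) : Prop :=
  p.1 ∪ p.2 = Set.univ ∧ ∀ a ∈ p.1 \ p.2, ∀ b ∈ p.2 \ p.1, ¬ G.Adj a b

def IsIndepCollection {V : Type} (G : SimpleGraph V) (C : Set (Set V × Set V)) : Prop :=
  (∀ p ∈ C, IsSeparation G p ∧ (p.1 \ p.2).Nonempty) ∧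
  ∀ p ∈ C, ∀ q ∈ C, p ≠ q → p.1 ⊆ q.2 ∧ q.1 ⊆ p.2

/-- A collection `L` of separations of `H` is essential if for every `(A,B) ∈ L`, every
vertex of `A ∩ B` has a neighbor in `A \ B` and `H[A \ B]` is connected. -/
def EssentialCollection {V : Type} (H : SimpleGraph V) (L : Set (Set V × Set V)) : Prop :=
  ∀ p ∈ L, (∀ v ∈ p.1 ∩ p.2, ∃ u ∈ p.1 \ p.2, H.Adj v u) ∧
    (H.induce (p.1 \ p.2)).Connected

def wedgeRel {V : Type} (H : SimpleGraph V) (Z : Set V) (k : ℕ) :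
    (↥Z ⊕ (↥(Zᶜ) × Fin k)) → (↥Z ⊕ (↥(Zᶜ) × Fin k)) → Prop
  | Sum.inl z, Sum.inl z' => H.Adj z z'
  | Sum.inl z, Sum.inr (v, _) => H.Adj z v
  | Sum.inr (v, _), Sum.inl z => H.Adj v z
  | Sum.inr (v, i), Sum.inr (w, j) => i = j ∧ H.Adj v w

/-- `H ∧_k Z`: `k` disjoint copies of `H` with the copies of each `z ∈ Z` identified. -/
def wedge {V : Type} (H : SimpleGraph V) (Z : Set V) (k : ℕ) :
    SimpleGraph (↥Z ⊕ (↥(Zᶜ) × Fin k)) :=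
  SimpleGraph.fromRel (wedgeRel H Z k)

/-- `⋂_{(A,B) ∈ C} B`. -/
def interB {V : Type} (C : Set (Set V × Set V)) : Set V := ⋂ p ∈ C, p.2

/-- `H ∧_k C := H ∧_k (⋂_{(A,B) ∈ C} B)`. -/
def wedgeC {V : Type} (H : SimpleGraph V) (C : Set (Set V × Set V)) (k : ℕ) :
    SimpleGraph (↥(interB C) ⊕ (↥((interB C)ᶜ) × Fin k)) :=
  wedge H (interB C) k

/-- A class of graphs, given as a predicate on graphs over arbitrary vertex types. -/
abbrev GraphClass : Type 1 := ∀ (U : Type), SimpleGraph U → Prop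

/-- `H` is isomorphic to a subgraph of `G`. -/
def SubgraphOf {V W : Type} (H : SimpleGraph V) (G : SimpleGraph W) : Prop :=
  ∃ f : V → W, Function.Injective f ∧ ∀ ⦃u v⦄, H.Adj u v → G.Adj (f u) (f v)

/-- A class of (finite) graphs is monotone if it is closed under taking subgraphs. -/
def MonotoneClass (𝒢 : GraphClass) : Prop :=
  ∀ (V W : Type) [Fintype V] [Fintype W] (H : SimpleGraph V) (G : SimpleGraph W),
    SubgraphOf H G → 𝒢 W G → 𝒢 V H

/-- An independent collection `L` of separations of `H` is `𝒢`-duplicable if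
`H ∧_k L ∈ 𝒢` for infinitely many positive integers `k`. -/
def Duplicable (𝒢 : GraphClass) {V : Type} (H : SimpleGraph V)
    (L : Set (Set V × Set V)) : Prop :=
  {k : ℕ | 0 < k ∧ 𝒢 _ (wedgeC H L k)}.Infinite

/-- `G` is a subdivision of `H` in which each edge of `H` is subdivided between `0` and `n`
times: branch vertices are given by an injective `f`, edges of `H` correspond to internally
disjoint paths of `G` of length at most `n + 1`, and every vertex and edge of `G` lies on
these paths. -/
def IsSubdivisionLE {V W : Type} (n : ℕ) (G : SimpleGraph W) (H : SimpleGraph V) : Prop :=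
  ∃ (f : V → W) (p : ∀ ⦃u v : V⦄, H.Adj u v → G.Walk (f u) (f v)),
    Function.Injective f ∧
    (∀ ⦃u v⦄ (h : H.Adj u v), (p h).IsPath ∧ (p h).length ≤ n + 1) ∧
    (∀ ⦃u v⦄ (h : H.Adj u v) (x : W), x ∈ (p h).support → x ≠ f u → x ≠ f v →
      (∀ z, f z ≠ x) ∧
      ∀ ⦃u' v'⦄ (h' : H.Adj u' v'), x ∈ (p h').support → s(u, v) = s(u', v')) ∧
    (∀ x : W, (∃ z, f z = x) ∨ ∃ (u v : V) (h : H.Adj u v), x ∈ (p h).support) ∧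
    (∀ e ∈ G.edgeSet, ∃ (u v : V) (h : H.Adj u v), e ∈ (p h).edges)

section AuxLift
open SimpleGraph
variable {X : Type} {G : SimpleGraph X} {S : Set X}

def liftW : ∀ {a b : X} (w : G.Walk a b) (hw : ∀ x ∈ w.support, x ∈ S),
    (G.comap (Subtype.val : S → X)).Walk ⟨a, hw a w.start_mem_support⟩ ⟨b, hw b w.end_mem_support⟩
  | _, _, SimpleGraph.Walk.nil, _ => SimpleGraph.Walk.nil
  | _, _, @SimpleGraph.Walk.cons _ _ a c b h p, hw =>
      SimpleGraph.Walk.cons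
        (show (G.comap (Subtype.val : S → X)).Adj ⟨a, hw a (by simp)⟩ ⟨c, hw c (by simp)⟩ from h)
        (liftW p fun x hx => hw x (by simp [hx]))

theorem liftW_support : ∀ {a b : X} (w : G.Walk a b) (hw : ∀ x ∈ w.support, x ∈ S),
    ((liftW w hw).support.map Subtype.val) = w.support
  | _, _, SimpleGraph.Walk.nil, _ => rfl
  | _, _, SimpleGraph.Walk.cons h p, hw => by
      simp only [liftW, SimpleGraph.Walk.support_cons, List.map_cons, liftW_support]

theorem liftW_length : ∀ {a b : X} (w : G.Walk a b) (hw : ∀ x ∈ w.support, x ∈ S),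
    (liftW w hw).length = w.length
  | _, _, SimpleGraph.Walk.nil, _ => rfl
  | _, _, SimpleGraph.Walk.cons h p, hw => by
      simp only [liftW, SimpleGraph.Walk.length_cons, liftW_length]

theorem liftW_edges : ∀ {a b : X} (w : G.Walk a b) (hw : ∀ x ∈ w.support, x ∈ S),
    ((liftW w hw).edges.map (Sym2.map Subtype.val)) = w.edges
  | _, _, SimpleGraph.Walk.nil, _ => rfl
  | _, _, SimpleGraph.Walk.cons h p, hw => by
      simp only [liftW, SimpleGraph.Walk.edges_cons, List.map_cons, liftW_edges, Sym2.map_pair_eq]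

theorem liftW_isPath {a b : X} (w : G.Walk a b) (hw : ∀ x ∈ w.support, x ∈ S)
    (h : w.IsPath) : (liftW w hw).IsPath := by
  rw [SimpleGraph.Walk.isPath_def]
  apply List.Nodup.of_map Subtype.val
  rw [liftW_support]; exact h.support_nodup

end AuxLift

/-- Let `𝒢` be a monotone class of graphs, `H` a graph, and `L` an essential `𝒢`-duplicable
independent collection of separations of `H`.  Let `H'` be obtained from `H` by adding edges
so that `A ∩ B` is a clique for every `(A,B) ∈ L`.  Then some subdivision of `H'`, in which
each edge is subdivided between `0` and `|V(H)| − 2` times, belongs to `𝒢`. -/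
theorem stmt14 (𝒢 : GraphClass) (h𝒢 : MonotoneClass 𝒢)
    {V : Type} [Fintype V] (H : SimpleGraph V)
    (L : Set (Set V × Set V)) (hL : IsIndepCollection H L)
    (hess : EssentialCollection H L) (hdup : Duplicable 𝒢 H L) :
    ∃ (W : Type) (_ : Fintype W) (G'' : SimpleGraph W),
      𝒢 W G'' ∧
      IsSubdivisionLE (Fintype.card V - 2) G''
        (SimpleGraph.fromRel fun a b =>
          H.Adj a b ∨ ∃ p ∈ L, a ∈ p.1 ∩ p.2 ∧ b ∈ p.1 ∩ p.2) := by
  classical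
  set H' : SimpleGraph V := SimpleGraph.fromRel (fun a b =>
      H.Adj a b ∨ ∃ p ∈ L, a ∈ p.1 ∩ p.2 ∧ b ∈ p.1 ∩ p.2) with hH'
  obtain ⟨k, hkS, hkbig⟩ := hdup.exists_gt (Fintype.card (Sym2 V))
  obtain ⟨hk0, hGk⟩ := hkS
  haveI : NeZero k := ⟨hk0.ne'⟩
  -- basic facts
  have hZmem : ∀ p ∈ L, p.1 ∩ p.2 ⊆ interB L := by
    intro p hp v hv
    refine Set.mem_iInter₂.mpr fun q hq => ?_
    by_cases hpq : p = q
    · exact hpq ▸ hv.2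
    · exact (hL.2 p hp q hq hpq).1 hv.1
  have hDZ : ∀ p ∈ L, p.1 \ p.2 ⊆ (interB L)ᶜ := by
    intro p hp v hv hvZ
    exact hv.2 (Set.mem_iInter₂.mp hvZ p hp)
  -- edge enumeration
  let enum : Sym2 V ≃ Fin (Fintype.card (Sym2 V)) := Fintype.equivFin (Sym2 V)
  let ι : Sym2 V → Fin k := fun e => ⟨(enum e).1 + 1, by have := (enum e).2; omega⟩
  have hι0 : ∀ e, ι e ≠ 0 := by intro e; simp [ι, Fin.ext_iff]
  have hιinj : Function.Injective ι := by
    intro a b hab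
    have : (enum a) = (enum b) := by
      rw [Fin.ext_iff] at hab ⊢; simpa [ι] using hab
    exact enum.injective this
  -- vertex mapping
  set X := (↥(interB L) ⊕ (↥((interB L)ᶜ) × Fin k)) with hX
  let F : V → X := fun v =>
    if h : v ∈ interB L then Sum.inl ⟨v, h⟩ else Sum.inr (⟨v, h⟩, 0)
  have hFZ : ∀ (v) (h : v ∈ interB L), F v = Sum.inl ⟨v, h⟩ := fun v h => dif_pos h
  have hF0 : ∀ (v) (h : v ∉ interB L), F v = Sum.inr (⟨v, h⟩, 0) := fun v h => dif_neg h
  have hFinj : Function.Injective F := by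
    intro a b hab
    by_cases ha : a ∈ interB L <;> by_cases hb : b ∈ interB L
    · rw [hFZ a ha, hFZ b hb] at hab
      injection hab with h
      exact congrArg Subtype.val h
    · rw [hFZ a ha, hF0 b hb] at hab; simp at hab
    · rw [hF0 a ha, hFZ b hb] at hab; simp at hab
    · rw [hF0 a ha, hF0 b hb] at hab
      injection hab with h
      exact congrArg (fun y => (Subtype.val y.1)) h
  set Gw : SimpleGraph X := wedgeC H L k with hGw
  have hadj1 : ∀ (z : ↥(interB L)) (d : ↥((interB L)ᶜ)) (i : Fin k),
      H.Adj z d → Gw.Adj (Sum.inl z) (Sum.inr (d, i)) := by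
    intro z d i h
    exact ⟨by simp, Or.inl h⟩
  have hadj2 : ∀ (d d' : ↥((interB L)ᶜ)) (i : Fin k),
      H.Adj d d' → Gw.Adj (Sum.inr (d, i)) (Sum.inr (d', i)) := by
    intro d d' i h
    refine ⟨?_, Or.inl ⟨rfl, h⟩⟩
    simp only [ne_eq, Sum.inr.injEq, Prod.mk.injEq, not_and]
    intro h1 _
    exact H.irrefl (h1 ▸ h)
  have hadjF : ∀ u v, H.Adj u v → Gw.Adj (F u) (F v) := by
    intro u v h
    by_cases hu : u ∈ interB L <;> by_cases hv : v ∈ interB L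
    · rw [hFZ u hu, hFZ v hv]
      refine ⟨?_, Or.inl h⟩
      simp only [ne_eq, Sum.inl.injEq, Subtype.mk.injEq]
      exact h.ne
    · rw [hFZ u hu, hF0 v hv]; exact hadj1 _ _ _ h
    · rw [hF0 u hu, hFZ v hv]; exact (hadj1 _ _ _ h.symm).symm
    · rw [hF0 u hu, hF0 v hv]; exact hadj2 _ _ _ h
  -- key: for every edge of H' there is a suitable walk in the wedge
  have key : ∀ u v : V, H'.Adj u v → ∃ w : Gw.Walk (F u) (F v),
      w.IsPath ∧ w.length ≤ (Fintype.card V - 2) + 1 ∧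
      ∀ x ∈ w.support, x = F u ∨ x = F v ∨ ∃ d, x = Sum.inr (d, ι s(u, v)) := by
    intro u v huv
    rw [hH', SimpleGraph.fromRel_adj] at huv
    obtain ⟨hne, hor⟩ := huv
    by_cases hHuv : H.Adj u v
    · refine ⟨(hadjF u v hHuv).toWalk, ?_, ?_, ?_⟩
      · rw [SimpleGraph.Walk.isPath_def]
        simp only [SimpleGraph.Adj.toWalk, SimpleGraph.Walk.support_cons,
          SimpleGraph.Walk.support_nil, List.nodup_cons, List.mem_singleton,
          List.nodup_cons, List.not_mem_nil, not_false_iff, List.nodup_nil, and_true]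
        exact fun hc => hne (hFinj hc)
      · simpa [SimpleGraph.Adj.toWalk] using Nat.le_add_left 1 _
      · intro x hx
        simp only [SimpleGraph.Adj.toWalk, SimpleGraph.Walk.support_cons,
          SimpleGraph.Walk.support_nil, List.mem_cons, List.mem_singleton,
          List.not_mem_nil, or_false] at hx
        rcases hx with h | h
        · exact Or.inl h
        · exact Or.inr (Or.inl h)
    · have hex : ∃ p ∈ L, u ∈ p.1 ∩ p.2 ∧ v ∈ p.1 ∩ p.2 := by
        rcases hor with (h | h) | (h | h)
        · exact absurd h hHuv
        · exact h
        · exact absurd h.symm hHuv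
        · obtain ⟨p, hp, h1, h2⟩ := h; exact ⟨p, hp, h2, h1⟩
      obtain ⟨p, hp, hu, hv⟩ := hex
      obtain ⟨hnbr, hconn⟩ := hess p hp
      obtain ⟨u', hu'D, hadjuu'⟩ := hnbr u hu
      obtain ⟨v', hv'D, hadjvv'⟩ := hnbr v hv
      have huZ : u ∈ interB L := hZmem p hp hu
      have hvZ : v ∈ interB L := hZmem p hp hv
      set D : Set V := p.1 \ p.2 with hDdef
      set i : Fin k := ι s(u, v) with hidef
      let φ : (H.induce D) →g Gw :=
        ⟨fun x => Sum.inr (⟨x.1, hDZ p hp x.2⟩, i), fun {a b} hab => hadj2 _ _ i hab⟩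
      have hφinj : Function.Injective φ := by
        intro a b hab
        have hab' : (Sum.inr (⟨a.1, hDZ p hp a.2⟩, i) : X)
            = Sum.inr (⟨b.1, hDZ p hp b.2⟩, i) := hab
        injection hab' with h
        injection h with h1 h2
        simp only [Subtype.mk.injEq] at h1
        exact Subtype.ext h1
      have hreach : (H.induce D).Reachable ⟨u', hu'D⟩ ⟨v', hv'D⟩ := hconn.preconnected _ _
      let q : (H.induce D).Path ⟨u', hu'D⟩ ⟨v', hv'D⟩ := (hreach.some).toPath
      have h1 : Gw.Adj (F u) (φ ⟨u', hu'D⟩) := by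
        rw [hFZ u huZ]; exact hadj1 _ _ i hadjuu'
      have h2 : Gw.Adj (φ ⟨v', hv'D⟩) (F v) := by
        rw [hFZ v hvZ]; exact (hadj1 _ _ i hadjvv').symm
      have hqsup : ∀ x ∈ ((q.val).map φ).support, ∃ d, x = Sum.inr (d, i) := by
        intro x hx
        rw [SimpleGraph.Walk.support_map] at hx
        obtain ⟨a, -, rfl⟩ := List.mem_map.mp hx
        exact ⟨_, rfl⟩
      have hqpath : ((q.val).map φ).IsPath :=
        SimpleGraph.Walk.map_isPath_of_injective hφinj q.prop
      have hFuN : F u ∉ ((q.val).map φ).support := by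
        intro hc
        obtain ⟨d, hd⟩ := hqsup _ hc
        rw [hFZ u huZ] at hd; simp at hd
      have hFvN : F v ∉ ((q.val).map φ).support := by
        intro hc
        obtain ⟨d, hd⟩ := hqsup _ hc
        rw [hFZ v hvZ] at hd; simp at hd
      have hFuv : F u ≠ F v := fun hc => hne (hFinj hc)
      refine ⟨(SimpleGraph.Walk.cons h1 ((q.val).map φ)).concat h2, ?_, ?_, ?_⟩
      · rw [SimpleGraph.Walk.isPath_def, SimpleGraph.Walk.support_concat,
          SimpleGraph.Walk.support_cons, List.cons_append,
          List.nodup_cons]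
        constructor
        · simp only [List.mem_append, List.mem_singleton]
          rintro (hc | hc)
          · exact hFuN hc
          · exact hFuv hc
        · rw [List.nodup_append']
          exact ⟨hqpath.support_nodup, List.nodup_singleton _,
            fun x hx hx' => hFvN ((List.mem_singleton.mp hx') ▸ hx)⟩
      · have hlen : ((SimpleGraph.Walk.cons h1 ((q.val).map φ)).concat h2).length
            = q.val.length + 2 := by
          rw [SimpleGraph.Walk.length_concat, SimpleGraph.Walk.length_cons,
            SimpleGraph.Walk.length_map]
        haveI : Fintype ↥D := Fintype.ofFinite _
        have hlt : q.val.length < Fintype.card ↥D := q.prop.length_lt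
        have hcard : Fintype.card ↥D + 2 ≤ Fintype.card V := by
          have huD : u ∉ D := fun hc => hc.2 hu.2
          have hvD : v ∉ D := fun hc => hc.2 hv.2
          have hle : (insert u (insert v D.toFinset)).card ≤ Fintype.card V :=
            Finset.card_le_univ _
          rw [Finset.card_insert_of_notMem (by simp [huD, hne]),
            Finset.card_insert_of_notMem (by simp [hvD]), Set.toFinset_card] at hle
          omega
        omega
      · intro x hx
        rw [SimpleGraph.Walk.support_concat, SimpleGraph.Walk.support_cons,
          List.cons_append] at hx
        rcases List.mem_cons.mp hx with h | h
        · exact Or.inl h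
        · rcases List.mem_append.mp h with h | h
          · exact Or.inr (Or.inr (hqsup x h))
          · exact Or.inr (Or.inl (List.mem_singleton.mp h))
  choose pW hPpath hPlen hPsup using key
  -- the graph consisting exactly of the chosen walks
  let Gmid : SimpleGraph X :=
    { Adj := fun a b => ∃ (u v : V) (h : H'.Adj u v), s(a, b) ∈ (pW u v h).edges
      symm := by
        constructor
        rintro a b ⟨u, v, h, he⟩
        exact ⟨u, v, h, by rwa [Sym2.eq_swap] at he⟩
      loopless := by
        constructor
        rintro a ⟨u, v, h, he⟩
        exact Gw.irrefl (SimpleGraph.Walk.edges_subset_edgeSet _ he) }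
  let S : Set X := Set.range F ∪ {x | ∃ (u v : V) (h : H'.Adj u v), x ∈ (pW u v h).support}
  let G'' : SimpleGraph ↥S := Gmid.comap (Subtype.val : ↥S → X)
  haveI : Fintype X := Fintype.ofFinite _
  haveI : Fintype ↥S := Fintype.ofFinite _
  refine ⟨↥S, inferInstance, G'', ?_, ?_⟩
  · -- G'' belongs to 𝒢 by monotonicity
    refine h𝒢 _ _ G'' Gw ⟨Subtype.val, Subtype.val_injective, ?_⟩ hGk
    rintro x y ⟨u, v, h, he⟩
    exact SimpleGraph.Walk.edges_subset_edgeSet _ he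
  · -- the subdivision structure
    have hFS : ∀ v, F v ∈ S := fun v => Or.inl ⟨v, rfl⟩
    let f : V → ↥S := fun v => ⟨F v, hFS v⟩
    have hTE : ∀ (u v : V) (h : H'.Adj u v), ∀ e ∈ (pW u v h).edges, e ∈ Gmid.edgeSet := by
      intro u v h e he
      induction e with
      | _ a b => exact ⟨u, v, h, he⟩
    let pm : ∀ (u v : V), H'.Adj u v → Gmid.Walk (F u) (F v) :=
      fun u v h => (pW u v h).transfer Gmid (hTE u v h)
    have hpmsup : ∀ (u v) (h : H'.Adj u v), (pm u v h).support = (pW u v h).support :=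
      fun u v h => SimpleGraph.Walk.support_transfer _ _
    have hSsup : ∀ (u v) (h : H'.Adj u v), ∀ x ∈ (pm u v h).support, x ∈ S :=
      fun u v h x hx => Or.inr ⟨u, v, h, (hpmsup u v h ▸ hx)⟩
    let P : ∀ ⦃u v : V⦄, H'.Adj u v → G''.Walk (f u) (f v) :=
      fun u v h => liftW (pm u v h) (hSsup u v h)
    have hPsupval : ∀ (u v) (h : H'.Adj u v) (x : ↥S),
        x ∈ (P h).support ↔ x.val ∈ (pW u v h).support := by
      intro u v h x
      constructor
      · intro hx
        have : x.val ∈ (P h).support.map Subtype.val := List.mem_map_of_mem hx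
        rwa [liftW_support, hpmsup] at this
      · intro hx
        rw [← hpmsup, ← liftW_support (pm u v h) (hSsup u v h)] at hx
        obtain ⟨y, hy, hyx⟩ := List.mem_map.mp hx
        rwa [← Subtype.ext hyx]
    have hFnoti : ∀ (z : V) (d : ↥((interB L)ᶜ)) (e : Sym2 V),
        F z ≠ Sum.inr (d, ι e) := by
      intro z d e hc
      by_cases hz : z ∈ interB L
      · rw [hFZ z hz] at hc; simp at hc
      · rw [hF0 z hz] at hc
        injection hc with h
        injection h with h1 h2
        exact hι0 e h2.symm
    refine ⟨f, P, ?_, ?_, ?_, ?_, ?_⟩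
    · intro a b hab
      exact hFinj (congrArg Subtype.val hab)
    · intro u v h
      constructor
      · refine liftW_isPath _ _ ?_
        rw [SimpleGraph.Walk.isPath_def, hpmsup]
        exact (hPpath u v h).support_nodup
      · rw [liftW_length, SimpleGraph.Walk.length_transfer]
        exact hPlen u v h
    · intro u v h x hx hxu hxv
      have hxval : x.val ∈ (pW u v h).support := (hPsupval u v h x).mp hx
      rcases hPsup u v h x.val hxval with hc | hc | ⟨d, hd⟩
      · exact absurd (Subtype.ext hc) hxu
      · exact absurd (Subtype.ext hc) hxv
      constructor
      · intro z hz
        have : F z = Sum.inr (d, ι s(u, v)) := by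
          rw [← hd]; exact congrArg Subtype.val hz
        exact hFnoti z d _ this
      · intro u' v' h' hx'
        have hx'val : x.val ∈ (pW u' v' h').support := (hPsupval u' v' h' x).mp hx'
        rcases hPsup u' v' h' x.val hx'val with hc' | hc' | ⟨d', hd'⟩
        · exact absurd (hc'.symm.trans hd) (hFnoti u' d _)
        · exact absurd (hc'.symm.trans hd) (hFnoti v' d _)
        · rw [hd] at hd'
          injection hd' with hinj
          injection hinj with hinj1 hinj2
          exact hιinj hinj2
    · intro x
      rcases x.2 with ⟨z, hz⟩ | ⟨u, v, h, hx⟩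
      · exact Or.inl ⟨z, Subtype.ext hz⟩
      · exact Or.inr ⟨u, v, h, (hPsupval u v h x).mpr hx⟩
    · intro e he
      induction e with
      | _ x y =>
        obtain ⟨u, v, h, he'⟩ := he
        refine ⟨u, v, h, ?_⟩
        have hmap : (P h).edges.map (Sym2.map Subtype.val) = (pW u v h).edges := by
          rw [liftW_edges, SimpleGraph.Walk.edges_transfer]
        rw [← hmap] at he'
        have : Sym2.map Subtype.val s(x, y) = s(x.val, y.val) := Sym2.map_pair_eq _ _ _
        rw [← this] at he'
        obtain ⟨e', he'', heq⟩ := List.mem_map.mp he'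
        rwa [← Sym2.map.injective Subtype.val_injective heq]
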